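/- Let G be a simple graph with n ≥ 1 vertices and m edges. Then s_Q(G) ≤ sqrt(2·M₁(G) + 4m - 8m²/n), where M₁(G) = Σᵢ dᵢ² and s_Q(G) is the signless Laplacian spread. -/

import Mathlib

open Matrix

/-- The spread of a Hermitian real matrix: largest minus smallest eigenvalue. -/
noncomputable def spread {n : ℕ} {A : Matrix (Fin n) (Fin n) ℝ} (hA : A.IsHermitian) : ℝ :=
  (⨆ i, hA.eigenvalues i) - ⨅ i, hA.eigenvalues i

/-- The signless Laplacian matrix Q = D + A of a simple graph. -/
noncomputable def signlessLaplacian {n : ℕ} (G : SimpleGraph (Fin n)) [DecidableRel G.Adj] :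
    Matrix (Fin n) (Fin n) ℝ :=
  Matrix.diagonal (fun i => (G.degree i : ℝ)) + G.adjMatrix ℝ

lemma tr_eig {n : ℕ} {A : Matrix (Fin n) (Fin n) ℝ} (hA : A.IsHermitian) :
    A.trace = ∑ i, hA.eigenvalues i := by
  conv_lhs => rw [hA.spectral_theorem, Unitary.conjStarAlgAut_apply]
  rw [trace_mul_cycle]
  have h1 : (star (hA.eigenvectorUnitary : Matrix (Fin n) (Fin n) ℝ)) *
      (hA.eigenvectorUnitary : Matrix (Fin n) (Fin n) ℝ) = 1 := by
    simpa using congrArg (Subtype.val) (unitary.star_mul_self hA.eigenvectorUnitary)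
  rw [h1, one_mul, trace_diagonal]
  simp [RCLike.ofReal]

lemma tr_sq_eig {n : ℕ} {A : Matrix (Fin n) (Fin n) ℝ} (hA : A.IsHermitian) :
    (A * A).trace = ∑ i, hA.eigenvalues i ^ 2 := by
  have h1 : (star (hA.eigenvectorUnitary : Matrix (Fin n) (Fin n) ℝ)) *
      (hA.eigenvectorUnitary : Matrix (Fin n) (Fin n) ℝ) = 1 := by
    simpa using congrArg (Subtype.val) (unitary.star_mul_self hA.eigenvectorUnitary)
  conv_lhs => rw [hA.spectral_theorem, Unitary.conjStarAlgAut_apply]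
  rw [show ∀ U D : Matrix (Fin n) (Fin n) ℝ, (U * D * star U) * (U * D * star U)
      = U * (D * (star U * U) * D) * star U from fun U D => by noncomm_ring]
  rw [h1, mul_one, trace_mul_cycle, ← mul_assoc, h1, one_mul, diagonal_mul_diagonal,
    trace_diagonal]
  simp [RCLike.ofReal, sq]

lemma trQ {n : ℕ} (G : SimpleGraph (Fin n)) [DecidableRel G.Adj] :
    (signlessLaplacian G).trace = 2 * (G.edgeFinset.card : ℝ) := by
  have h := G.sum_degrees_eq_twice_card_edges
  simp only [signlessLaplacian, trace_add, trace_diagonal, SimpleGraph.trace_adjMatrix, add_zero]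
  exact_mod_cast congrArg (Nat.cast : ℕ → ℝ) h

lemma sum_adj_row {n : ℕ} (G : SimpleGraph (Fin n)) [DecidableRel G.Adj] (i : Fin n) :
    ∑ j, (if G.Adj i j then (1:ℝ) else 0) = (G.degree i : ℝ) := by
  simp [SimpleGraph.degree, SimpleGraph.neighborFinset_eq_filter, Finset.sum_boole]

lemma trQ2 {n : ℕ} (G : SimpleGraph (Fin n)) [DecidableRel G.Adj] :
    (signlessLaplacian G * signlessLaplacian G).trace
      = (∑ i, (G.degree i : ℝ) ^ 2) + 2 * (G.edgeFinset.card : ℝ) := by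
  have hdeg : (∑ i, (G.degree i : ℝ)) = 2 * (G.edgeFinset.card : ℝ) := by
    exact_mod_cast congrArg (Nat.cast : ℕ → ℝ) G.sum_degrees_eq_twice_card_edges
  have h1 : ∀ i j : Fin n, signlessLaplacian G i j * signlessLaplacian G j i
      = (if i = j then (G.degree i : ℝ)^2 else 0)
        + (if G.Adj i j then (1:ℝ) else 0) := by
    intro i j
    by_cases h : i = j
    · subst h; simp [signlessLaplacian, sq]
    · have hsym : G.Adj j i ↔ G.Adj i j := G.adj_comm j i
      by_cases ha : G.Adj i j <;>
        simp [signlessLaplacian, diagonal_apply_ne _ h, diagonal_apply_ne' _ h, ha, hsym, h]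
  rw [trace]
  simp only [diag_apply, mul_apply]
  rw [Finset.sum_congr rfl (fun i _ => Finset.sum_congr rfl (fun j _ => h1 i j))]
  simp only [Finset.sum_add_distrib, Finset.sum_ite_eq', Finset.sum_ite_eq, Finset.mem_univ,
    if_true, sum_adj_row, hdeg]

theorem spread_Q_upper_bound {n : ℕ} (hn : 1 ≤ n)
    (G : SimpleGraph (Fin n)) [DecidableRel G.Adj]
    (hQ : (signlessLaplacian G).IsHermitian) :
    spread hQ ≤ Real.sqrt (2 * (∑ i, (G.degree i : ℝ) ^ 2)
      + 4 * (G.edgeFinset.card : ℝ) - 8 * (G.edgeFinset.card : ℝ) ^ 2 / n) := by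
  have hne : Nonempty (Fin n) := Fin.pos_iff_nonempty.mp hn
  set f := hQ.eigenvalues with hf
  set m := (G.edgeFinset.card : ℝ)
  obtain ⟨i0, hi0⟩ := exists_eq_ciSup_of_finite (f := f)
  obtain ⟨j0, hj0⟩ := exists_eq_ciInf_of_finite (f := f)
  have hspread : spread hQ = f i0 - f j0 := by rw [spread, ← hi0, ← hj0]
  rcases le_or_gt (spread hQ) 0 with h0 | h0
  · exact h0.trans (Real.sqrt_nonneg _)
  have hij : i0 ≠ j0 := by
    intro h; rw [hspread, h, sub_self] at h0; exact lt_irrefl _ h0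
  have hnpos : (0:ℝ) < n := by exact_mod_cast hn
  -- key facts
  have hS : ∑ i, f i = 2 * m := by rw [← tr_eig hQ, trQ]
  have hS2 : ∑ i, f i ^ 2 = (∑ i, (G.degree i : ℝ) ^ 2) + 2 * m := by
    rw [← tr_sq_eig hQ, trQ2]
  set t : ℝ := (2 * m) / n with ht
  have hsum : ∑ i, (f i - t) ^ 2 = (∑ i, (G.degree i : ℝ) ^ 2) + 2 * m - 4 * m ^ 2 / n := by
    have : ∑ i, (f i - t) ^ 2 = (∑ i, f i ^ 2) - 2 * t * (∑ i, f i) + n * t ^ 2 := by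
      rw [Finset.sum_congr rfl (fun i _ => by ring_nf :
        ∀ i ∈ Finset.univ, (f i - t) ^ 2 = f i ^ 2 - 2 * t * f i + t ^ 2)]
      rw [Finset.sum_add_distrib, Finset.sum_sub_distrib, ← Finset.mul_sum,
        Finset.sum_const, Finset.card_univ, Fintype.card_fin, nsmul_eq_mul]
    rw [this, hS, hS2, ht]
    field_simp
    ring
  have hkey : (f i0 - f j0) ^ 2 ≤ 2 * ∑ i, (f i - t) ^ 2 := by
    have h2 : (f i0 - t) ^ 2 + (f j0 - t) ^ 2 ≤ ∑ i, (f i - t) ^ 2 := by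
      have := Finset.sum_le_sum_of_subset_of_nonneg
        (Finset.subset_univ ({i0, j0} : Finset (Fin n)))
        (fun i _ _ => sq_nonneg (f i - t))
      rwa [Finset.sum_pair hij] at this
    nlinarith [sq_nonneg ((f i0 - t) + (f j0 - t))]
  rw [hspread]
  rw [Real.le_sqrt' (hspread ▸ h0)]
  calc (f i0 - f j0) ^ 2 ≤ 2 * ∑ i, (f i - t) ^ 2 := hkey
    _ = 2 * (∑ i, (G.degree i : ℝ) ^ 2) + 4 * m - 8 * m ^ 2 / n := by rw [hsum]; ring
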